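/- Greedy decomposition in the finite setting (Proposition 2.1): Let 0 < p, r < ∞. There exists a constant C = C(p,r) such that for every finite outer measure setting (X, μ, ω) and every nonnegative function f on X there exists a sequence of sets {E_k : k ∈ ℤ} ⊆ 𝒫(X) such that, setting F_k = ∪_{l ≥ k} E_l, for every k ∈ ℤ: (1) ℓ^r(f 1_{F_{k+1}^c})(E_k) > 2^k whenever E_k ≠ ∅; (2) ‖f 1_{F_k^c}‖_{L^∞(ℓ^r)} ≤ 2^k; (3) μ(ℓ^r(f) > 2^k) ≤ Σ_{l ≥ k} μ(E_l); (4) μ(E_k) ≤ C μ(ℓ^r(f) > 2^{k-1}). -/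

import Mathlib

open MeasureTheory Set
open scoped ENNReal

noncomputable section

/-- The outer `ℓ^r` size in the finite setting: for `r < ∞`,
`ℓ^r(f)(A) = (μ(A)⁻¹ Σ_{x∈A} ω(x) f(x)^r)^{1/r}`; for `r = ∞` the sup of `f` on `A`. -/
def ellF {X : Type} (μ : Set X → ℝ≥0∞) (ω : X → ℝ≥0∞)
    (r : ℝ≥0∞) (f : X → ℝ≥0∞) (A : Set X) : ℝ≥0∞ :=
  if r = ∞ then ⨆ x ∈ A, f x
  else ((μ A)⁻¹ * ∑' x : A, ω x.1 * f x.1 ^ r.toReal) ^ r.toReal⁻¹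

/-- The outer `L^∞(ℓ^r)` quasi-norm in the finite setting. -/
def supF {X : Type} (μ : Set X → ℝ≥0∞) (ω : X → ℝ≥0∞)
    (r : ℝ≥0∞) (f : X → ℝ≥0∞) : ℝ≥0∞ :=
  ⨆ A : Set X, ellF μ ω r f A

/-- The super level measure `μ(ℓ^r(f) > λ)` in the finite setting. -/
def slF {X : Type} (μ : Set X → ℝ≥0∞) (ω : X → ℝ≥0∞)
    (r : ℝ≥0∞) (f : X → ℝ≥0∞) (lam : ℝ≥0∞) : ℝ≥0∞ :=
  ⨅ (A : Set X) (_ : supF μ ω r (Aᶜ.indicator f) ≤ lam), μ A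

/-- The outer `L^p(ℓ^r)` quasi-norm in the finite setting. -/
def LpF {X : Type} (μ : Set X → ℝ≥0∞) (ω : X → ℝ≥0∞)
    (p r : ℝ≥0∞) (f : X → ℝ≥0∞) : ℝ≥0∞ :=
  if p = ∞ then supF μ ω r f
  else (∫⁻ l in Ioi (0:ℝ),
      ENNReal.ofReal (p.toReal * l ^ (p.toReal - 1)) *
        slF μ ω r f (ENNReal.ofReal l)) ^ p.toReal⁻¹

namespace GreedyAux

variable {X : Type} [Fintype X]

/-- The weighted `r`-sum of `g` over `A`. -/
def Sm (ω : X → ℝ≥0∞) (ρ : ℝ) (g : X → ℝ≥0∞) (A : Set X) : ℝ≥0∞ :=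
  ∑' x : A, ω x.1 * g x.1 ^ ρ

lemma Sm_eq (ω : X → ℝ≥0∞) (ρ : ℝ) (g : X → ℝ≥0∞) (A : Set X) :
    Sm ω ρ g A = ∑ x : X, A.indicator (fun y => ω y * g y ^ ρ) x := by
  rw [Sm]
  rw [tsum_subtype A (fun y => ω y * g y ^ ρ), tsum_fintype]

lemma Sm_empty (ω : X → ℝ≥0∞) (ρ : ℝ) (g : X → ℝ≥0∞) : Sm ω ρ g (∅ : Set X) = 0 := by
  simp [Sm_eq]

lemma Sm_mono_set (ω : X → ℝ≥0∞) (ρ : ℝ) (g : X → ℝ≥0∞) {A B : Set X} (h : A ⊆ B) :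
    Sm ω ρ g A ≤ Sm ω ρ g B := by
  rw [Sm_eq, Sm_eq]
  exact Finset.sum_le_sum fun x _ =>
    Set.indicator_le_indicator_of_subset h (fun _ => zero_le) x

lemma Sm_mono_fn (ω : X → ℝ≥0∞) {ρ : ℝ} (hρ : 0 ≤ ρ) {g g' : X → ℝ≥0∞} {A : Set X}
    (h : ∀ x ∈ A, g x ≤ g' x) : Sm ω ρ g A ≤ Sm ω ρ g' A := by
  rw [Sm, Sm]
  exact ENNReal.tsum_le_tsum fun x =>
    mul_le_mul_right (ENNReal.rpow_le_rpow (h x.1 x.2) hρ) _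

lemma Sm_union (ω : X → ℝ≥0∞) (ρ : ℝ) (g : X → ℝ≥0∞) {A B : Set X} (h : Disjoint A B) :
    Sm ω ρ g (A ∪ B) = Sm ω ρ g A + Sm ω ρ g B := by
  simp only [Sm_eq, Set.indicator_union_of_disjoint h, Finset.sum_add_distrib]

lemma Sm_inter_support (ω : X → ℝ≥0∞) {ρ : ℝ} (hρ : 0 < ρ) (g : X → ℝ≥0∞) (A : Set X) :
    Sm ω ρ g (A ∩ {x | g x ≠ 0}) = Sm ω ρ g A := by
  rw [Sm_eq, Sm_eq]
  refine Finset.sum_congr rfl fun x _ => ?_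
  by_cases hA : x ∈ A
  · by_cases hg : g x = 0
    · simp [Set.indicator_apply, hA, hg, ENNReal.zero_rpow_of_pos hρ]
    · simp [Set.indicator_apply, hA, hg]
  · simp [Set.indicator_apply, hA]

variable {μ : Set X → ℝ≥0∞} {ω : X → ℝ≥0∞} {r : ℝ≥0∞}

lemma ellF_empty (hμ0 : μ ∅ = 0) (hr : r ≠ ∞) (hρ : 0 < r.toReal) (g : X → ℝ≥0∞) :
    ellF μ ω r g (∅ : Set X) = 0 := by
  rw [ellF, if_neg hr]
  rw [show (∑' x : (∅ : Set X), ω x.1 * g x.1 ^ r.toReal) = 0 from tsum_empty]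
  rw [mul_zero, ENNReal.zero_rpow_of_pos (by positivity)]

lemma ellF_le_iff (hr : r ≠ ∞) (hρ : 0 < r.toReal) {A : Set X}
    (h0 : μ A ≠ 0) (htop : μ A ≠ ∞) {g : X → ℝ≥0∞} {lam : ℝ≥0∞} :
    ellF μ ω r g A ≤ lam ↔ Sm ω r.toReal g A ≤ lam ^ r.toReal * μ A := by
  rw [ellF, if_neg hr, ENNReal.rpow_inv_le_iff hρ]
  rw [show ((μ A)⁻¹ * ∑' x : A, ω x.1 * g x.1 ^ r.toReal)
      = Sm ω r.toReal g A / μ A by rw [Sm, mul_comm, div_eq_mul_inv]]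
  exact ENNReal.div_le_iff h0 htop

lemma lt_ellF_iff (hr : r ≠ ∞) (hρ : 0 < r.toReal) {A : Set X}
    (h0 : μ A ≠ 0) (htop : μ A ≠ ∞) {g : X → ℝ≥0∞} {lam : ℝ≥0∞} :
    lam < ellF μ ω r g A ↔ lam ^ r.toReal * μ A < Sm ω r.toReal g A := by
  rw [← not_le, ← not_le, not_iff_not]
  exact ellF_le_iff hr hρ h0 htop

lemma supF_le_iff (hμ0 : μ ∅ = 0) (hpos : ∀ A : Set X, A.Nonempty → μ A ≠ 0)
    (hfin : ∀ A : Set X, μ A ≠ ∞) (hr : r ≠ ∞) (hρ : 0 < r.toReal)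
    {g : X → ℝ≥0∞} {lam : ℝ≥0∞} :
    supF μ ω r g ≤ lam ↔ ∀ A : Set X, Sm ω r.toReal g A ≤ lam ^ r.toReal * μ A := by
  rw [supF, iSup_le_iff]
  constructor
  · intro h A
    rcases A.eq_empty_or_nonempty with rfl | hA
    · simp [Sm_empty]
    · exact (ellF_le_iff hr hρ (hpos A hA) (hfin A)).1 (h A)
  · intro h A
    rcases A.eq_empty_or_nonempty with rfl | hA
    · rw [ellF_empty hμ0 hr hρ]; exact zero_le
    · exact (ellF_le_iff hr hρ (hpos A hA) (hfin A)).2 (h A)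

/-- The inner greedy selection at a single level `k`. -/
lemma greedy_inner (hμ0 : μ ∅ = 0) (hmono : ∀ A B : Set X, A ⊆ B → μ A ≤ μ B)
    (hsub : ∀ A B : Set X, μ (A ∪ B) ≤ μ A + μ B)
    (hpos : ∀ A : Set X, A.Nonempty → μ A ≠ 0) (hfin : ∀ A : Set X, μ A ≠ ∞)
    (hr : r ≠ ∞) (hρ : 0 < r.toReal) (k : ℤ) :
    ∀ (N : ℕ) (g : X → ℝ≥0∞),
      (Set.toFinite {x | g x ≠ 0}).toFinset.card ≤ N →
      ∃ (E : Set X) (t : ℝ≥0∞),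
        E ⊆ {x | g x ≠ 0} ∧ μ E ≤ t ∧ t ≠ ∞ ∧
        (((2:ℝ≥0∞) ^ k) ^ r.toReal * t ≤ Sm ω r.toReal g E) ∧
        (E.Nonempty → ((2:ℝ≥0∞) ^ k) ^ r.toReal * t < Sm ω r.toReal g E) ∧
        supF μ ω r (Eᶜ.indicator g) ≤ (2:ℝ≥0∞) ^ k ∧
        ∀ (B : Set X) (d : ℝ≥0∞),
          (∀ D : Set X, D ⊆ Bᶜ → Sm ω r.toReal g D ≤ d * μ D) →
          ((2:ℝ≥0∞) ^ k) ^ r.toReal * t ≤ d * t + Sm ω r.toReal g (E ∩ B) := by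
  classical
  have hdone : ∀ g : X → ℝ≥0∞, supF μ ω r g ≤ (2:ℝ≥0∞) ^ k →
      ∃ (E : Set X) (t : ℝ≥0∞),
        E ⊆ {x | g x ≠ 0} ∧ μ E ≤ t ∧ t ≠ ∞ ∧
        (((2:ℝ≥0∞) ^ k) ^ r.toReal * t ≤ Sm ω r.toReal g E) ∧
        (E.Nonempty → ((2:ℝ≥0∞) ^ k) ^ r.toReal * t < Sm ω r.toReal g E) ∧
        supF μ ω r (Eᶜ.indicator g) ≤ (2:ℝ≥0∞) ^ k ∧
        ∀ (B : Set X) (d : ℝ≥0∞),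
          (∀ D : Set X, D ⊆ Bᶜ → Sm ω r.toReal g D ≤ d * μ D) →
          ((2:ℝ≥0∞) ^ k) ^ r.toReal * t ≤ d * t + Sm ω r.toReal g (E ∩ B) := by
    intro g hg
    refine ⟨∅, 0, empty_subset _, le_of_eq hμ0, by simp, by simp [Sm_empty],
      fun h => absurd h (by simp), ?_, ?_⟩
    · simpa using hg
    · intro B d _; simp
  intro N
  induction N with
  | zero =>
    intro g hg
    refine hdone g ?_
    have hg0 : ∀ x, g x = 0 := by
      intro x
      by_contra hx
      have : x ∈ (Set.toFinite {x | g x ≠ 0}).toFinset := by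
        simp [Set.Finite.mem_toFinset, hx]
      have := Finset.card_pos.mpr ⟨x, this⟩
      omega
    rw [supF_le_iff hμ0 hpos hfin hr hρ]
    intro A
    have : Sm ω r.toReal g A = 0 := by
      rw [Sm_eq]
      refine Finset.sum_eq_zero fun x _ => ?_
      have : (fun y => ω y * g y ^ r.toReal) x = 0 := by
        simp [hg0 x, ENNReal.zero_rpow_of_pos hρ]
      simp [Set.indicator_apply, this]
    simp [this]
  | succ N ih =>
    intro g hg
    by_cases hs : supF μ ω r g ≤ (2:ℝ≥0∞) ^ k
    · exact hdone g hs
    set c : ℝ≥0∞ := ((2:ℝ≥0∞) ^ k) ^ r.toReal with hc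
    have h2k0 : (2:ℝ≥0∞) ^ k ≠ 0 := (ENNReal.zpow_pos (by norm_num) (by norm_num) k).ne'
    have h2kt : (2:ℝ≥0∞) ^ k ≠ ∞ := (ENNReal.zpow_lt_top (by norm_num) (by norm_num) k).ne
    obtain ⟨A₀, hA₀⟩ : ∃ A₀ : Set X, ¬ ellF μ ω r g A₀ ≤ (2:ℝ≥0∞) ^ k := by
      by_contra h
      push_neg at h
      exact hs (by rw [supF]; exact iSup_le h)
    have h1 : (2:ℝ≥0∞) ^ k < ellF μ ω r g A₀ := not_le.1 hA₀
    have hA₀ne : A₀.Nonempty := by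
      rcases A₀.eq_empty_or_nonempty with rfl | h
      · rw [ellF_empty hμ0 hr hρ] at h1
        exact absurd h1 (by simp)
      · exact h
    have h2 : c * μ A₀ < Sm ω r.toReal g A₀ :=
      (lt_ellF_iff hr hρ (hpos A₀ hA₀ne) (hfin A₀)).1 h1
    set A₁ : Set X := A₀ ∩ {x | g x ≠ 0} with hA₁
    have hSm1 : Sm ω r.toReal g A₁ = Sm ω r.toReal g A₀ := Sm_inter_support ω hρ g A₀
    have h3 : c * μ A₁ < Sm ω r.toReal g A₁ := by
      rw [hSm1]
      exact lt_of_le_of_lt (mul_le_mul_right (hmono _ _ inter_subset_left) c) h2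
    have hA₁ne : A₁.Nonempty := by
      rcases A₁.eq_empty_or_nonempty with h | h
      · rw [h, Sm_empty] at h3
        exact absurd h3 (by simp)
      · exact h
    have hA₁supp : A₁ ⊆ {x | g x ≠ 0} := inter_subset_right
    set g' : X → ℝ≥0∞ := A₁ᶜ.indicator g with hg'
    have hgg' : ∀ x, g' x ≤ g x := fun x => Set.indicator_le_self _ _ x
    have hsupp' : {x | g' x ≠ 0} = {x | g x ≠ 0} \ A₁ := by
      ext x
      by_cases hx : x ∈ A₁ <;> simp [hg', Set.indicator_apply, hx]
    have hcard' : (Set.toFinite {x | g' x ≠ 0}).toFinset.card ≤ N := by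
      have hss : (Set.toFinite {x | g' x ≠ 0}).toFinset ⊂ (Set.toFinite {x | g x ≠ 0}).toFinset := by
        constructor
        · intro x hx
          rw [Set.Finite.mem_toFinset] at hx ⊢
          rw [hsupp'] at hx
          exact hx.1
        · intro hcon
          obtain ⟨a, ha⟩ := hA₁ne
          have ha1 : a ∈ (Set.toFinite {x | g x ≠ 0}).toFinset := by
            rw [Set.Finite.mem_toFinset]; exact hA₁supp ha
          have ha2 := hcon ha1
          rw [Set.Finite.mem_toFinset, hsupp'] at ha2
          exact ha2.2 ha
      have := Finset.card_lt_card hss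
      omega
    obtain ⟨E', t', hE'supp, hμE', ht'fin, hle', hstrict', hsup', hd'⟩ := ih g' hcard'
    have hdisj : Disjoint A₁ E' := by
      rw [Set.disjoint_left]
      intro a haA haE
      have := hE'supp haE
      rw [hsupp'] at this
      exact this.2 haA
    refine ⟨A₁ ∪ E', μ A₁ + t', ?_, ?_, ?_, ?_, ?_, ?_, ?_⟩
    · exact union_subset hA₁supp (hE'supp.trans (by rw [hsupp']; exact diff_subset))
    · exact (hsub _ _).trans (add_le_add_right hμE' _)
    · exact ENNReal.add_ne_top.2 ⟨hfin _, ht'fin⟩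
    · -- non-strict
      have key : Sm ω r.toReal g A₁ + Sm ω r.toReal g' E' ≤ Sm ω r.toReal g (A₁ ∪ E') := by
        rw [Sm_union ω r.toReal g hdisj]
        exact add_le_add_right (Sm_mono_fn ω hρ.le fun x _ => hgg' x) _
      calc c * (μ A₁ + t') = c * μ A₁ + c * t' := by rw [mul_add]
        _ ≤ Sm ω r.toReal g A₁ + Sm ω r.toReal g' E' := add_le_add h3.le hle'
        _ ≤ _ := key
    · -- strict
      intro _
      have key : Sm ω r.toReal g A₁ + Sm ω r.toReal g' E' ≤ Sm ω r.toReal g (A₁ ∪ E') := by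
        rw [Sm_union ω r.toReal g hdisj]
        exact add_le_add_right (Sm_mono_fn ω hρ.le fun x _ => hgg' x) _
      have hct' : c * t' ≠ ∞ :=
        ENNReal.mul_ne_top (ENNReal.rpow_ne_top_of_nonneg hρ.le h2kt) ht'fin
      calc c * (μ A₁ + t') = c * μ A₁ + c * t' := by rw [mul_add]
        _ < Sm ω r.toReal g A₁ + c * t' := by
            exact ENNReal.add_lt_add_right hct' h3
        _ ≤ Sm ω r.toReal g A₁ + Sm ω r.toReal g' E' := add_le_add_right hle' _
        _ ≤ _ := key
    · -- sup bound
      have hind : (A₁ ∪ E')ᶜ.indicator g = E'ᶜ.indicator g' := by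
        rw [hg', Set.indicator_indicator, Set.compl_union, inter_comm]
      rw [hind]
      exact hsup'
    · -- the competitor estimate
      intro B d hB
      have hB' : ∀ D : Set X, D ⊆ Bᶜ → Sm ω r.toReal g' D ≤ d * μ D := fun D hD =>
        (Sm_mono_fn ω hρ.le fun x _ => hgg' x).trans (hB D hD)
      have IH := hd' B d hB'
      have p1 : c * μ A₁ ≤ d * μ A₁ + Sm ω r.toReal g (A₁ ∩ B) := by
        have hsplit : Sm ω r.toReal g A₁
            = Sm ω r.toReal g (A₁ \ B) + Sm ω r.toReal g (A₁ ∩ B) := by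
          rw [← Sm_union ω r.toReal g disjoint_sdiff_inter, Set.diff_union_inter]
        calc c * μ A₁ ≤ Sm ω r.toReal g A₁ := h3.le
          _ = Sm ω r.toReal g (A₁ \ B) + Sm ω r.toReal g (A₁ ∩ B) := hsplit
          _ ≤ d * μ (A₁ \ B) + Sm ω r.toReal g (A₁ ∩ B) := by
              exact add_le_add_left (hB _ fun x hx => hx.2) _
          _ ≤ d * μ A₁ + Sm ω r.toReal g (A₁ ∩ B) := by
              exact add_le_add_left (mul_le_mul_right (hmono _ _ diff_subset) d) _
      have hSmfinal : Sm ω r.toReal g (A₁ ∩ B) + Sm ω r.toReal g' (E' ∩ B)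
          ≤ Sm ω r.toReal g ((A₁ ∪ E') ∩ B) := by
        have : (A₁ ∪ E') ∩ B = (A₁ ∩ B) ∪ (E' ∩ B) := Set.union_inter_distrib_right _ _ _
        rw [this, Sm_union ω r.toReal g (hdisj.mono inter_subset_left inter_subset_left)]
        exact add_le_add_right (Sm_mono_fn ω hρ.le fun x _ => hgg' x) _
      calc c * (μ A₁ + t') = c * μ A₁ + c * t' := by rw [mul_add]
        _ ≤ (d * μ A₁ + Sm ω r.toReal g (A₁ ∩ B)) + (d * t' + Sm ω r.toReal g' (E' ∩ B)) :=
            add_le_add p1 IH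
        _ = d * (μ A₁ + t') + (Sm ω r.toReal g (A₁ ∩ B) + Sm ω r.toReal g' (E' ∩ B)) := by
            ring
        _ ≤ d * (μ A₁ + t') + Sm ω r.toReal g ((A₁ ∪ E') ∩ B) := add_le_add_right hSmfinal _

end GreedyAux

/-- Accumulated union for the outer (downward) recursion. -/
def Useq {X : Type} (G : (X → ℝ≥0∞) → ℤ → Set X) (f : X → ℝ≥0∞) (L : ℤ) : ℕ → Set X
  | 0 => ∅
  | (j+1) => Useq G f L j ∪ G ((Useq G f L j)ᶜ.indicator f) (L - 1 - j)


theorem greedy_decomposition_finite (p r : ℝ≥0∞)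
    (hp0 : 0 < p) (hp : p ≠ ∞) (hr0 : 0 < r) (hr : r ≠ ∞) :
    ∃ C : ℝ≥0∞, 0 < C ∧ C ≠ ∞ ∧
      ∀ (X : Type) (_ : Fintype X) (μ : Set X → ℝ≥0∞) (ω : X → ℝ≥0∞),
        μ ∅ = 0 →
        (∀ A B : Set X, A ⊆ B → μ A ≤ μ B) →
        (∀ A B : Set X, μ (A ∪ B) ≤ μ A + μ B) →
        (∀ x : X, 0 < μ {x} ∧ μ {x} < ∞) →
        (∀ x : X, 0 < ω x ∧ ω x < ∞) →
        ∀ f : X → ℝ≥0∞, (∀ x, f x ≠ ∞) →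
          ∃ E : ℤ → Set X,
            ∀ k : ℤ,
              ((E k).Nonempty →
                (2 : ℝ≥0∞) ^ k <
                  ellF μ ω r ((⋃ (l : ℤ) (_ : k + 1 ≤ l), E l)ᶜ.indicator f) (E k)) ∧
              supF μ ω r ((⋃ (l : ℤ) (_ : k ≤ l), E l)ᶜ.indicator f) ≤ (2 : ℝ≥0∞) ^ k ∧
              slF μ ω r f ((2 : ℝ≥0∞) ^ k) ≤ ∑' l : {l : ℤ // k ≤ l}, μ (E l.1) ∧
              μ (E k) ≤ C * slF μ ω r f ((2 : ℝ≥0∞) ^ (k - 1)) := by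
  classical
  have hρ : 0 < r.toReal := ENNReal.toReal_pos hr0.ne' hr
  set q : ℝ≥0∞ := (2 : ℝ≥0∞) ^ r.toReal with hqdef
  have hq1 : 1 < q := ENNReal.one_lt_rpow ENNReal.one_lt_two hρ
  have hqtop : q ≠ ∞ := ENNReal.rpow_ne_top_of_nonneg hρ.le (by norm_num)
  have hq0 : q ≠ 0 := (zero_lt_one.trans hq1).ne'
  have hqinv1 : q⁻¹ < 1 := ENNReal.inv_lt_one.2 hq1
  have hden0 : (1 : ℝ≥0∞) - q⁻¹ ≠ 0 := (tsub_pos_of_lt hqinv1).ne'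
  have hdentop : (1 : ℝ≥0∞) - q⁻¹ ≠ ∞ :=
    (tsub_le_self.trans_lt ENNReal.one_lt_top).ne
  refine ⟨(1 - q⁻¹)⁻¹ * q, ?_, ?_, ?_⟩
  · exact ENNReal.mul_pos (ENNReal.inv_ne_zero.2 hdentop) hq0
  · exact ENNReal.mul_ne_top (ENNReal.inv_ne_top.2 hden0) hqtop
  intro X _ μ ω hμ0 hmono hsub hpt hω f hf
  -- basic finiteness/positivity of μ
  have hfin : ∀ A : Set X, μ A ≠ ∞ := by
    have key : ∀ s : Finset X, μ ↑s ≠ ∞ := by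
      intro s
      induction s using Finset.induction with
      | empty => simp [hμ0]
      | @insert a s ha ih =>
        rw [Finset.coe_insert, Set.insert_eq]
        exact ne_top_of_le_ne_top (ENNReal.add_ne_top.2 ⟨(hpt a).2.ne, ih⟩) (hsub _ _)
    intro A
    refine ne_top_of_le_ne_top (key A.toFinite.toFinset) (hmono _ _ ?_)
    rw [Set.Finite.coe_toFinset]
  have hApos : ∀ A : Set X, A.Nonempty → μ A ≠ 0 := by
    rintro A ⟨x, hx⟩
    exact ((hpt x).1.trans_le (hmono _ _ (Set.singleton_subset_iff.2 hx))).ne'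
  -- the greedy single-level selection
  have main : ∀ (g : X → ℝ≥0∞) (k : ℤ),
      ∃ (E : Set X) (t : ℝ≥0∞),
        E ⊆ {x | g x ≠ 0} ∧ μ E ≤ t ∧ t ≠ ∞ ∧
        (((2:ℝ≥0∞) ^ k) ^ r.toReal * t ≤ GreedyAux.Sm ω r.toReal g E) ∧
        (E.Nonempty → ((2:ℝ≥0∞) ^ k) ^ r.toReal * t < GreedyAux.Sm ω r.toReal g E) ∧
        supF μ ω r (Eᶜ.indicator g) ≤ (2:ℝ≥0∞) ^ k ∧
        ∀ (B : Set X) (d : ℝ≥0∞),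
          (∀ D : Set X, D ⊆ Bᶜ → GreedyAux.Sm ω r.toReal g D ≤ d * μ D) →
          ((2:ℝ≥0∞) ^ k) ^ r.toReal * t ≤ d * t + GreedyAux.Sm ω r.toReal g (E ∩ B) :=
    fun g k => GreedyAux.greedy_inner hμ0 hmono hsub hApos hfin hr hρ k
      (Fintype.card X) g (Finset.card_le_univ _)
  choose GE Gt hGsupp hGμle hGtfin hGle hGstrict hGsup hGd using main
  clear hGsupp hGle
  -- the starting level L
  have hSmfin : ∀ A : Set X, GreedyAux.Sm ω r.toReal f A ≠ ∞ := by
    intro A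
    rw [GreedyAux.Sm_eq]
    refine (ENNReal.sum_lt_top.2 fun x _ => ?_).ne
    refine lt_of_le_of_lt (Set.indicator_le_self _ _ x) ?_
    exact ENNReal.mul_lt_top (hω x).2 (ENNReal.rpow_lt_top_of_nonneg hρ.le (hf x))
  have hellfin : ∀ A : Set X, ellF μ ω r f A ≠ ∞ := by
    intro A
    rcases A.eq_empty_or_nonempty with rfl | hA
    · rw [GreedyAux.ellF_empty hμ0 hr hρ]; exact ENNReal.zero_ne_top
    · rw [ellF, if_neg hr]
      refine ENNReal.rpow_ne_top_of_nonneg (by positivity) ?_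
      exact ENNReal.mul_ne_top (ENNReal.inv_ne_top.2 (hApos A hA)) (hSmfin A)
  have hSfin : supF μ ω r f ≠ ∞ := by
    obtain ⟨A, hA⟩ := Finite.exists_max (fun A : Set X => ellF μ ω r f A)
    exact ne_top_of_le_ne_top (hellfin A) (iSup_le hA)
  obtain ⟨n, hn⟩ := ENNReal.exists_nat_gt hSfin
  set L : ℤ := (n : ℤ) with hLdef
  have hL : supF μ ω r f ≤ (2:ℝ≥0∞) ^ L := by
    refine hn.le.trans ?_
    have h1 : (n : ℝ≥0∞) ≤ ((2 ^ n : ℕ) : ℝ≥0∞) := Nat.cast_le.2 (Nat.lt_two_pow_self).le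
    refine h1.trans_eq ?_
    rw [hLdef, zpow_natCast]
    push_cast
    ring
  -- the construction
  set U : ℕ → Set X := Useq GE f L with hUdef
  have hUsucc : ∀ j : ℕ, U (j+1) = U j ∪ GE ((U j)ᶜ.indicator f) (L - 1 - j) := fun j => rfl
  set E : ℤ → Set X :=
    fun k => if k < L then GE ((U (L-1-k).toNat)ᶜ.indicator f) k else ∅ with hEdef
  have hEk : ∀ k : ℤ, k < L → E k = GE ((U (L-1-k).toNat)ᶜ.indicator f) k :=
    fun k hk => if_pos hk
  have hEk' : ∀ k : ℤ, L ≤ k → E k = ∅ := fun k hk => if_neg (not_lt.2 hk)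
  have hUE : ∀ j : ℕ, U (j+1) = U j ∪ E (L-1-j) := by
    intro j
    rw [hUsucc j, hEk (L-1-j) (by omega)]
    have h : (L-1-(L-1-(j:ℤ))).toNat = j := by omega
    rw [h]
  set Fk : ℤ → Set X := fun k => ⋃ (l : ℤ) (_ : k ≤ l), E l with hFkdef
  have hFU : ∀ k : ℤ, (⋃ (l : ℤ) (_ : k ≤ l), E l) = Fk k := fun k => rfl
  have hFk_top : ∀ k : ℤ, L ≤ k → Fk k = ∅ := by
    intro k hk
    refine Set.eq_empty_iff_forall_notMem.2 fun x hx => ?_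
    simp only [hFkdef, Set.mem_iUnion] at hx
    obtain ⟨l, hl, hx⟩ := hx
    rw [hEk' l (by omega)] at hx
    exact hx
  have hFk_step : ∀ k : ℤ, Fk k = E k ∪ Fk (k+1) := by
    intro k
    ext x
    simp only [hFkdef, Set.mem_iUnion, Set.mem_union]
    constructor
    · rintro ⟨l, hl, hx⟩
      by_cases hlk : l = k
      · subst hlk; exact Or.inl hx
      · exact Or.inr ⟨l, by omega, hx⟩
    · rintro (hx | ⟨l, hl, hx⟩)
      exacts [⟨k, le_refl _, hx⟩, ⟨l, by omega, hx⟩]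
  have hFkU : ∀ m : ℕ, Fk (L - m) = U m := by
    intro m
    induction m with
    | zero => rw [Nat.cast_zero, sub_zero]; exact hFk_top L le_rfl
    | succ m ih =>
      have e1 : L - ((m+1 : ℕ) : ℤ) = L - 1 - m := by push_cast; ring
      have e2 : (L - 1 - (m:ℤ)) + 1 = L - m := by ring
      rw [e1, hFk_step, e2, ih, hUE m, union_comm]
  have hFkU' : ∀ k : ℤ, k ≤ L → Fk k = U (L - k).toNat := by
    intro k hk
    have h : L - ((L-k).toNat : ℤ) = k := by omega
    conv_lhs => rw [← h]
    exact hFkU _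
  -- property (2)
  have h2 : ∀ k : ℤ, supF μ ω r ((Fk k)ᶜ.indicator f) ≤ (2:ℝ≥0∞) ^ k := by
    intro k
    rcases le_or_gt L k with hk | hk
    · rw [hFk_top k hk]
      simp only [Set.compl_empty, Set.indicator_univ]
      exact hL.trans (ENNReal.zpow_le_of_le one_le_two hk)
    · have hj : Fk k = U ((L-1-k).toNat + 1) := by
        have e : (L - k).toNat = (L-1-k).toNat + 1 := by omega
        rw [hFkU' k hk.le, e]
      rw [hj, hUsucc]
      have hLj : L - 1 - (((L-1-k).toNat : ℕ) : ℤ) = k := by omega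
      rw [hLj]
      have hind : (U (L-1-k).toNat ∪ GE ((U (L-1-k).toNat)ᶜ.indicator f) k)ᶜ.indicator f
          = (GE ((U (L-1-k).toNat)ᶜ.indicator f) k)ᶜ.indicator
            ((U (L-1-k).toNat)ᶜ.indicator f) := by
        rw [Set.indicator_indicator, Set.compl_union, inter_comm]
      rw [hind]
      exact hGsup _ k
  refine ⟨E, fun k => ⟨?_, ?_, ?_, ?_⟩⟩
  · -- property (1)
    intro hne
    rcases le_or_gt L k with hk | hk
    · rw [hEk' k hk] at hne
      exact absurd hne (by simp)
    · rw [hFU (k+1)]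
      have hje : Fk (k+1) = U (L-1-k).toNat := by
        have e : (L - (k+1)).toNat = (L-1-k).toNat := by omega
        rw [hFkU' _ (by omega), e]
      rw [hje, hEk k hk]
      rw [hEk k hk] at hne
      refine (GreedyAux.lt_ellF_iff hr hρ (hApos _ hne) (hfin _)).2 ?_
      calc ((2:ℝ≥0∞)^k)^r.toReal * μ (GE ((U (L-1-k).toNat)ᶜ.indicator f) k)
          ≤ ((2:ℝ≥0∞)^k)^r.toReal * Gt ((U (L-1-k).toNat)ᶜ.indicator f) k :=
            mul_le_mul_right (hGμle _ k) _
        _ < _ := hGstrict _ k hne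
  · -- property (2)
    rw [hFU k]
    exact h2 k
  · -- property (3)
    have hslF : slF μ ω r f ((2:ℝ≥0∞)^k) ≤ μ (Fk k) := by
      have h := h2 k
      exact iInf₂_le (Fk k) h
    refine hslF.trans ?_
    have hsubun : Fk k ⊆ ⋃ l ∈ Finset.Icc k (L-1), E l := by
      intro x hx
      simp only [hFkdef, Set.mem_iUnion] at hx ⊢
      obtain ⟨l, hl, hx⟩ := hx
      by_cases hlL : l < L
      · exact ⟨l, Finset.mem_Icc.2 (by omega), hx⟩
      · rw [hEk' l (by omega)] at hx
        exact absurd hx (Set.notMem_empty x)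
    have hfinsub : ∀ (s : Finset ℤ), μ (⋃ l ∈ s, E l) ≤ ∑ l ∈ s, μ (E l) := by
      intro s
      induction s using Finset.induction with
      | empty => simp [hμ0]
      | @insert a s ha ih =>
        rw [Finset.set_biUnion_insert, Finset.sum_insert ha]
        exact (hsub _ _).trans (add_le_add_right ih _)
    refine ((hmono _ _ hsubun).trans (hfinsub _)).trans ?_
    have heq : ∑ l ∈ Finset.Icc k (L-1), μ (E l)
        = ∑ l ∈ (Finset.Icc k (L-1)).subtype (fun l => k ≤ l), μ (E l.1) := by
      rw [Finset.sum_subtype_eq_sum_filter (fun l => μ (E l)) (p := fun l => k ≤ l)]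
      refine (Finset.sum_congr ?_ fun _ _ => rfl).symm
      refine Finset.filter_true_of_mem fun l hl => ?_
      exact (Finset.mem_Icc.1 hl).1
    rw [heq]
    exact ENNReal.sum_le_tsum _
  · -- property (4)
    rcases le_or_gt L k with hk | hk
    · rw [hEk' k hk, hμ0]
      exact zero_le
    · -- minimizing competitor
      obtain ⟨B, hBsup, hBeq⟩ : ∃ B : Set X,
          supF μ ω r (Bᶜ.indicator f) ≤ (2:ℝ≥0∞)^(k-1) ∧
          μ B = slF μ ω r f ((2:ℝ≥0∞)^(k-1)) := by
        have hneS : ({B : Set X | supF μ ω r (Bᶜ.indicator f) ≤ (2:ℝ≥0∞)^(k-1)}).Nonempty := by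
          refine ⟨Set.univ, ?_⟩
          simp only [Set.mem_setOf_eq, Set.compl_univ, Set.indicator_empty]
          rw [GreedyAux.supF_le_iff hμ0 hApos hfin hr hρ]
          intro A
          have hz : GreedyAux.Sm ω r.toReal (fun _ => (0:ℝ≥0∞)) A = 0 := by
            rw [GreedyAux.Sm_eq]
            refine Finset.sum_eq_zero fun x _ => ?_
            have h0 : (fun y => ω y * (0:ℝ≥0∞) ^ r.toReal) x = 0 := by
              simp [ENNReal.zero_rpow_of_pos hρ]
            simp [Set.indicator_apply, h0]
          rw [hz]
          exact zero_le
        obtain ⟨B, hBmem, hBmin⟩ := Set.exists_min_image _ μ (Set.toFinite _) hneS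
        exact ⟨B, hBmem, le_antisymm (le_iInf₂ fun A hA => hBmin A hA) (iInf₂_le B hBmem)⟩
      set j := (L-1-k).toNat with hjdef
      set g : X → ℝ≥0∞ := ((U j)ᶜ).indicator f with hgdef
      have hEkk : E k = GE g k := hEk k hk
      have hcomp : ∀ D : Set X, D ⊆ Bᶜ →
          GreedyAux.Sm ω r.toReal g D ≤ ((2:ℝ≥0∞)^(k-1))^r.toReal * μ D := by
        intro D hD
        have h1 : GreedyAux.Sm ω r.toReal g D
            ≤ GreedyAux.Sm ω r.toReal (Bᶜ.indicator f) D := by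
          refine GreedyAux.Sm_mono_fn ω hρ.le fun x hx => ?_
          rw [Set.indicator_of_mem (hD hx)]
          exact Set.indicator_le_self _ _ x
        exact h1.trans (((GreedyAux.supF_le_iff hμ0 hApos hfin hr hρ).1 hBsup) D)
      have hkey := hGd g k B (((2:ℝ≥0∞)^(k-1))^r.toReal) hcomp
      have hg2 : supF μ ω r g ≤ (2:ℝ≥0∞)^(k+1) := by
        have h := h2 (k+1)
        have hje : Fk (k+1) = U j := by
          have e : (L - (k+1)).toNat = j := by omega
          rw [hFkU' _ (by omega), e]
        rwa [hje] at h
      have hSmB : GreedyAux.Sm ω r.toReal g (GE g k ∩ B)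
          ≤ ((2:ℝ≥0∞)^(k+1))^r.toReal * μ B := by
        refine (((GreedyAux.supF_le_iff hμ0 hApos hfin hr hρ).1 hg2) _).trans ?_
        exact mul_le_mul_right (hmono _ _ inter_subset_right) _
      set c : ℝ≥0∞ := ((2:ℝ≥0∞)^k)^r.toReal with hcdef
      have h2k0 : (2:ℝ≥0∞) ^ k ≠ 0 := (ENNReal.zpow_pos (by norm_num) (by norm_num) k).ne'
      have h2kt : (2:ℝ≥0∞) ^ k ≠ ∞ := (ENNReal.zpow_lt_top (by norm_num) (by norm_num) k).ne
      have hc0 : c ≠ 0 := by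
        rw [hcdef]
        simp [ENNReal.rpow_eq_zero_iff, h2k0, h2kt]
      have hctop : c ≠ ∞ := ENNReal.rpow_ne_top_of_nonneg hρ.le h2kt
      have e1 : ((2:ℝ≥0∞)^(k-1))^r.toReal = c * q⁻¹ := by
        rw [show k - 1 = k + (-1) by ring, ENNReal.zpow_add (by norm_num) (by norm_num),
          zpow_neg_one, ENNReal.mul_rpow_of_ne_top h2kt (by norm_num),
          ENNReal.inv_rpow, hcdef, hqdef]
      have e2 : ((2:ℝ≥0∞)^(k+1))^r.toReal = c * q := by
        rw [ENNReal.zpow_add (by norm_num) (by norm_num), zpow_one,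
          ENNReal.mul_rpow_of_ne_top h2kt (by norm_num), hcdef, hqdef]
      set t := Gt g k with htdef
      have ht : t ≠ ∞ := hGtfin g k
      have step1 : c * t ≤ c * (q⁻¹ * t + q * μ B) := by
        calc c * t ≤ (c*q⁻¹) * t + (c*q) * μ B := by
              rw [← e1, ← e2]
              exact hkey.trans (add_le_add_right hSmB _)
          _ = c * (q⁻¹ * t + q * μ B) := by ring
      have step2 : t ≤ q⁻¹ * t + q * μ B := (ENNReal.mul_le_mul_iff_right hc0 hctop).1 step1
      have step3 : (1 - q⁻¹) * t ≤ q * μ B := by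
        rw [ENNReal.sub_mul (fun _ _ => ht), one_mul]
        exact tsub_le_iff_right.2 (by rwa [add_comm] at step2)
      have step4 : t ≤ (1 - q⁻¹)⁻¹ * (q * μ B) := by
        conv_lhs => rw [← one_mul t, ← ENNReal.inv_mul_cancel hden0 hdentop]
        rw [mul_assoc]
        exact mul_le_mul_right step3 _
      calc μ (E k) ≤ t := by rw [hEkk]; exact hGμle g k
        _ ≤ (1 - q⁻¹)⁻¹ * (q * μ B) := step4
        _ = (1 - q⁻¹)⁻¹ * q * slF μ ω r f ((2:ℝ≥0∞)^(k-1)) := by rw [← hBeq]; ring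

end
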